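/- arXiv:2306.14600 — 2 statements merged into one kernel-verified Lean document; each statement's English description precedes it below -/
import Mathlib

section
/- Let k ≥ 2. Every vector field f with components in 𝒫^{k-2}(ℝ²) can be written as f = curl ψ + ∇v₂ for some scalars ψ, v₂ ∈ 𝒫^{k-1}(ℝ²), where curl ψ = (∂₂ψ, −∂₁ψ) denotes the two-dimensional (rotated-gradient) curl of a scalar polynomial. -/
open MvPolynomial Finsupp

/-- The formal Laplacian `Δp = ∑ⱼ ∂ⱼ∂ⱼp` of a polynomial in `d` variables. -/
noncomputable def lap {d : ℕ} (p : MvPolynomial (Fin d) ℝ) : MvPolynomial (Fin d) ℝ :=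
  ∑ j, pderiv j (pderiv j p)

/-- The formal divergence `div v = ∑ᵢ ∂ᵢvᵢ` of a polynomial vector field. -/
noncomputable def pdiv {d : ℕ} (v : Fin d → MvPolynomial (Fin d) ℝ) : MvPolynomial (Fin d) ℝ :=
  ∑ i, pderiv i (v i)

/-- The two-dimensional (rotated-gradient) curl of a scalar polynomial:
`curl ψ = (∂₂ψ, −∂₁ψ)` (0-based indices). -/
noncomputable def curl2 (ψ : MvPolynomial (Fin 2) ℝ) : Fin 2 → MvPolynomial (Fin 2) ℝ :=
  ![pderiv 1 ψ, -(pderiv 0 ψ)]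

/-- formal antiderivative in variable 1 -/
noncomputable def antid (p : MvPolynomial (Fin 2) ℝ) : MvPolynomial (Fin 2) ℝ :=
  ∑ m ∈ p.support, monomial (m + Finsupp.single 1 1) (coeff m p / ((m 1 : ℝ) + 1))

lemma degreeOf_monomial_le (i : Fin 2) (m : Fin 2 →₀ ℕ) (c : ℝ) :
    degreeOf i (monomial m c) ≤ m i := by
  by_cases hc : c = 0
  · simp [hc]
  · rw [degreeOf_monomial_eq m i hc]

lemma degreeOf_sum_le {α : Type*} (i : Fin 2) (s : Finset α)
    (g : α → MvPolynomial (Fin 2) ℝ) (a : ℕ) (h : ∀ x ∈ s, degreeOf i (g x) ≤ a) :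
    degreeOf i (∑ x ∈ s, g x) ≤ a := by
  classical
  induction s using Finset.induction with
  | empty => simp
  | insert _ _ hx ih =>
    rename_i b t
    rw [Finset.sum_insert hx]
    refine le_trans (degreeOf_add_le _ _ _) (max_le (h b (by simp)) (ih fun x hxx => h x (by simp [hxx])))

lemma pderiv_antid (p : MvPolynomial (Fin 2) ℝ) : pderiv 1 (antid p) = p := by
  rw [antid, map_sum]
  conv_rhs => rw [p.as_sum]
  refine Finset.sum_congr rfl fun m hm => ?_
  rw [pderiv_monomial]
  congr 1
  · ext j; simp [Finsupp.single_apply]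
  · rw [Finsupp.add_apply, Finsupp.single_apply]
    push_cast
    field_simp

lemma totalDegree_antid (p : MvPolynomial (Fin 2) ℝ) :
    totalDegree (antid p) ≤ totalDegree p + 1 := by
  refine totalDegree_finsetSum_le fun m hm => ?_
  refine le_trans (totalDegree_monomial_le _ _) ?_
  show (m + Finsupp.single 1 1).sum (fun _ e => e) ≤ _
  have : (m + Finsupp.single 1 1).sum (fun _ e => e) = m.sum (fun _ e => e) + 1 := by
    rw [Finsupp.sum_add_index (by simp) (by simp)]
    simp
  rw [this]
  exact Nat.add_le_add_right (le_totalDegree hm) 1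

lemma degreeOf0_antid (p : MvPolynomial (Fin 2) ℝ) :
    degreeOf 0 (antid p) ≤ degreeOf 0 p := by
  refine degreeOf_sum_le _ _ _ _ fun m hm => ?_
  refine le_trans (degreeOf_monomial_le _ _ _) ?_
  rw [Finsupp.add_apply, Finsupp.single_apply]
  simp only [if_neg (by decide : ¬(1:Fin 2) = 0), add_zero]
  exact degreeOf_le_iff.mp le_rfl m hm

lemma totalDegree_pderiv_le (i : Fin 2) (p : MvPolynomial (Fin 2) ℝ) {n : ℕ}
    (h : totalDegree p ≤ n + 1) : totalDegree (pderiv i p) ≤ n := by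
  conv_lhs => rw [p.as_sum]
  rw [map_sum]
  refine totalDegree_finsetSum_le fun m hm => ?_
  rw [pderiv_monomial]
  by_cases h0 : m i = 0
  · simp [h0]
  · refine le_trans (totalDegree_monomial_le _ _) ?_
    show (m - Finsupp.single i 1).sum (fun _ e => e) ≤ _
    have heq : (m - Finsupp.single i 1) + Finsupp.single i 1 = m := by
      ext j
      simp only [Finsupp.add_apply, Finsupp.tsub_apply, Finsupp.single_apply]
      by_cases hj : i = j
      · subst hj; simp; omega
      · simp [hj]
    have hsum : (m.sum fun _ e => e) = ((m - Finsupp.single i 1).sum fun _ e => e) + 1 := by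
      conv_lhs => rw [← heq]
      rw [Finsupp.sum_add_index (by simp) (by simp)]
      simp
    have hle := le_totalDegree hm
    omega

lemma degreeOf0_pderiv0_le (p : MvPolynomial (Fin 2) ℝ) {a : ℕ}
    (h : degreeOf 0 p ≤ a + 1) : degreeOf 0 (pderiv 0 p) ≤ a := by
  conv_lhs => rw [p.as_sum]
  rw [map_sum]
  refine degreeOf_sum_le _ _ _ _ fun m hm => ?_
  rw [pderiv_monomial]
  by_cases h0 : m 0 = 0
  · simp [h0]
  · refine le_trans (degreeOf_monomial_le _ _ _) ?_
    have h2 : m 0 ≤ a + 1 := le_trans (degreeOf_le_iff.mp le_rfl m hm) h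
    simp only [Finsupp.tsub_apply, Finsupp.single_eq_same]
    omega

lemma pderiv0_eq_zero (p : MvPolynomial (Fin 2) ℝ) (h : degreeOf 0 p ≤ 0) :
    pderiv 0 p = 0 := by
  apply pderiv_eq_zero_of_notMem_vars
  intro hv
  have := (mem_vars 0).mp hv
  obtain ⟨m, hm, hm0⟩ := this
  have := degreeOf_le_iff.mp h m hm
  simp [Finsupp.mem_support_iff] at hm0
  omega

lemma solve (a : ℕ) : ∀ (n : ℕ) (f₀ f₁ : MvPolynomial (Fin 2) ℝ),
    degreeOf 0 f₀ ≤ a → degreeOf 0 f₁ ≤ a → totalDegree f₀ ≤ n → totalDegree f₁ ≤ n →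
    ∃ ψ v : MvPolynomial (Fin 2) ℝ, totalDegree ψ ≤ n + 1 ∧ totalDegree v ≤ n + 1 ∧
      f₀ = pderiv 1 ψ + pderiv 0 v ∧ f₁ = -(pderiv 0 ψ) + pderiv 1 v := by
  induction a with
  | zero =>
    intro n f₀ f₁ h0 h1 t0 t1
    refine ⟨antid f₀, antid f₁, totalDegree_antid _ |>.trans (by omega),
      totalDegree_antid _ |>.trans (by omega), ?_, ?_⟩
    · rw [pderiv_antid, pderiv0_eq_zero _ (le_trans (degreeOf0_antid _) h1)]
      ring
    · rw [pderiv_antid, pderiv0_eq_zero _ (le_trans (degreeOf0_antid _) h0)]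
      ring
  | succ a ih =>
    intro n f₀ f₁ h0 h1 t0 t1
    obtain ⟨ψ', v', hψ', hv', e0, e1⟩ := ih n (-(pderiv 0 (antid f₁))) (pderiv 0 (antid f₀))
      (by rw [degreeOf_neg]; exact degreeOf0_pderiv0_le _ (le_trans (degreeOf0_antid _) h1))
      (degreeOf0_pderiv0_le _ (le_trans (degreeOf0_antid _) h0))
      (by rw [totalDegree_neg]; exact totalDegree_pderiv_le _ _ ((totalDegree_antid _).trans (by omega)))
      (totalDegree_pderiv_le _ _ ((totalDegree_antid _).trans (by omega)))
    refine ⟨antid f₀ + ψ', antid f₁ + v', ?_, ?_, ?_, ?_⟩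
    · exact le_trans (totalDegree_add _ _) (max_le ((totalDegree_antid _).trans (by omega)) hψ')
    · exact le_trans (totalDegree_add _ _) (max_le ((totalDegree_antid _).trans (by omega)) hv')
    · rw [map_add, map_add, pderiv_antid]
      linear_combination e0
    · rw [map_add, map_add, pderiv_antid]
      linear_combination e1

/-- For `k ≥ 2`, every vector field with components in `𝒫^{k-2}(ℝ²)` can be written as
`curl ψ + ∇v₂` with scalars `ψ, v₂ ∈ 𝒫^{k-1}(ℝ²)`. -/
theorem curl2_add_grad_decomposition (k : ℕ) (hk : 2 ≤ k)
    (f : Fin 2 → MvPolynomial (Fin 2) ℝ) (hf : ∀ i, (f i).totalDegree ≤ k - 2) :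
    ∃ (ψ v₂ : MvPolynomial (Fin 2) ℝ),
      ψ.totalDegree ≤ k - 1 ∧ v₂.totalDegree ≤ k - 1 ∧
      ∀ i, f i = curl2 ψ i + pderiv i v₂ := by
  obtain ⟨ψ, v, hψ, hv, e0, e1⟩ := solve (max (degreeOf 0 (f 0)) (degreeOf 0 (f 1))) (k - 2)
    (f 0) (f 1) (le_max_left _ _) (le_max_right _ _) (hf 0) (hf 1)
  have hk' : k - 2 + 1 = k - 1 := by omega
  rw [hk'] at hψ hv
  refine ⟨ψ, v, hψ, hv, fun i => ?_⟩
  fin_cases i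
  · simpa [curl2] using e0
  · simpa [curl2] using e1
end

section
/- Let d ∈ {2,3} and k ≥ 2. The dimension of the local Trefftz space {(v,q) : v a vector field with components in 𝒫^k(ℝ^d), q ∈ 𝒫^{k-1}(ℝ^d), Δv = ∇q and div v = 0} equals the dimension of the space of vector-valued harmonic polynomials of degree at most k, {w : w a vector field with components in 𝒫^k(ℝ^d), Δw = 0}. -/
open MvPolynomial

/-- The local Trefftz space: pairs `(v, q)` with `v` a vector field with components of total
degree at most `k`, `q` of total degree at most `k - 1`, satisfying `Δv = ∇q` and `div v = 0`. -/
noncomputable def trefftzSpace (d k : ℕ) :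
    Submodule ℝ ((Fin d → MvPolynomial (Fin d) ℝ) × MvPolynomial (Fin d) ℝ) where
  carrier := {vq | (∀ i, (vq.1 i).totalDegree ≤ k) ∧ vq.2.totalDegree ≤ k - 1 ∧
      (∀ i, lap (vq.1 i) = pderiv i vq.2) ∧ pdiv vq.1 = 0}
  add_mem' := by
    rintro ⟨v, q⟩ ⟨w, r⟩ ⟨hv, hq, hvq, hdv⟩ ⟨hw, hr, hwr, hdw⟩
    refine ⟨fun i => le_trans (totalDegree_add _ _) (max_le (hv i) (hw i)),
      le_trans (totalDegree_add _ _) (max_le hq hr), fun i => ?_, ?_⟩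
    · show lap (v i + w i) = pderiv i (q + r)
      simp [lap, Finset.sum_add_distrib, ← hvq i, ← hwr i]
    · show pdiv (v + w) = 0
      rw [show pdiv (v + w) = pdiv v + pdiv w by simp [pdiv, Finset.sum_add_distrib],
        hdv, hdw, add_zero]
  zero_mem' :=
    ⟨fun i => by simp, by simp, fun i => by simp [lap], by simp [pdiv]⟩
  smul_mem' := by
    rintro c ⟨v, q⟩ ⟨hv, hq, hvq, hdv⟩
    refine ⟨fun i => le_trans (totalDegree_smul_le _ _) (hv i),
      le_trans (totalDegree_smul_le _ _) hq, fun i => ?_, ?_⟩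
    · show lap (c • v i) = pderiv i (c • q)
      simp [lap, Finset.smul_sum, ← hvq i]
    · show pdiv (c • v) = 0
      rw [show pdiv (c • v) = c • pdiv v by simp [pdiv, Finset.smul_sum], hdv, smul_zero]

/-- The space of vector fields with polynomial components of total degree at most `k`
that are (componentwise) harmonic. -/
noncomputable def harmonicSpace (d k : ℕ) :
    Submodule ℝ (Fin d → MvPolynomial (Fin d) ℝ) where
  carrier := {w | (∀ i, (w i).totalDegree ≤ k) ∧ ∀ i, lap (w i) = 0}
  add_mem' := by
    rintro v w ⟨hv, hlv⟩ ⟨hw, hlw⟩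
    refine ⟨fun i => le_trans (totalDegree_add _ _) (max_le (hv i) (hw i)), fun i => ?_⟩
    show lap (v i + w i) = 0
    rw [show lap (v i + w i) = lap (v i) + lap (w i) by simp [lap, Finset.sum_add_distrib],
      hlv i, hlw i, add_zero]
  zero_mem' := ⟨fun i => by simp, fun i => by simp [lap]⟩
  smul_mem' := by
    rintro c v ⟨hv, hlv⟩
    refine ⟨fun i => le_trans (totalDegree_smul_le _ _) (hv i), fun i => ?_⟩
    show lap (c • v i) = 0
    rw [show lap (c • v i) = c • lap (v i) by simp [lap, Finset.smul_sum], hlv i, smul_zero]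


section Aux
variable {d : ℕ}

/-- degree of a multi-index as a finite sum -/
lemma tdeg_eq (t : Fin d →₀ ℕ) : (t.sum fun _ e => e) = ∑ i, t i :=
  Finsupp.sum_fintype _ _ (fun _ => rfl)

lemma tdeg_add_single (t : Fin d →₀ ℕ) (j : Fin d) (n : ℕ) :
    ((t + Finsupp.single j n).sum fun _ e => e) = (t.sum fun _ e => e) + n := by
  rw [tdeg_eq, tdeg_eq]
  simp only [Finsupp.add_apply, Finset.sum_add_distrib]
  congr 1
  simp [Finsupp.single_apply]

lemma coeff_pderiv' (j : Fin d) (t : Fin d →₀ ℕ) (f : MvPolynomial (Fin d) ℝ) :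
    coeff t (pderiv j f) = (t j + 1 : ℝ) * coeff (t + Finsupp.single j 1) f := by
  induction f using MvPolynomial.induction_on' with
  | monomial s a =>
    rw [pderiv_monomial]
    by_cases hs : s j = 0
    · simp only [coeff_monomial]
      have h1 : s ≠ t + Finsupp.single j 1 := by
        intro h; apply absurd hs; rw [h]; simp
      rw [if_neg h1, mul_zero]
      split_ifs with h2
      · simp [hs]
      · rfl
    · have key : s - Finsupp.single j 1 = t ↔ s = t + Finsupp.single j 1 := by
        constructor
        · intro h; rw [← h]; ext i
          simp only [Finsupp.tsub_apply, Finsupp.add_apply, Finsupp.single_apply]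
          split_ifs with h'
          · subst h'; omega
          · omega
        · intro h; rw [h, add_tsub_cancel_right]
      simp only [coeff_monomial]
      split_ifs with h1 h2 h2
      · have : s j = t j + 1 := by rw [key.mp h1]; simp
        rw [this]; push_cast; ring
      · exact absurd (key.mp h1) h2
      · exact absurd (key.mpr h2) h1
      · rw [mul_zero]
  | add p q hp hq => simp [hp, hq, mul_add]

lemma pderiv_comm' (i j : Fin d) (f : MvPolynomial (Fin d) ℝ) :
    pderiv i (pderiv j f) = pderiv j (pderiv i f) := by
  apply MvPolynomial.ext; intro t
  rw [coeff_pderiv', coeff_pderiv', coeff_pderiv', coeff_pderiv']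
  rcases eq_or_ne i j with rfl | hij
  · rfl
  · have h1 : ((t + Finsupp.single i 1 : Fin d →₀ ℕ)) j = t j := by
      simp [Finsupp.single_apply, hij]
    have h2 : ((t + Finsupp.single j 1 : Fin d →₀ ℕ)) i = t i := by
      simp [Finsupp.single_apply, hij.symm]
    rw [h1, h2, add_right_comm]
    ring

lemma coeff_lap (t : Fin d →₀ ℕ) (f : MvPolynomial (Fin d) ℝ) :
    coeff t (lap f) = ∑ j, ((t j + 1) * (t j + 2) : ℝ) * coeff (t + Finsupp.single j 2) f := by
  unfold lap
  rw [coeff_sum]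
  refine Finset.sum_congr rfl fun j _ => ?_
  rw [coeff_pderiv', coeff_pderiv']
  have h1 : ((t + Finsupp.single j 1 : Fin d →₀ ℕ)) j = t j + 1 := by simp
  have h2 : t + Finsupp.single j 1 + Finsupp.single j 1 = t + Finsupp.single j 2 := by
    rw [add_assoc, ← Finsupp.single_add]
  rw [h1, h2]
  push_cast
  ring

lemma lap_sub (p q : MvPolynomial (Fin d) ℝ) : lap (p - q) = lap p - lap q := by
  simp [lap, Finset.sum_sub_distrib]

lemma lap_smul (c : ℝ) (p : MvPolynomial (Fin d) ℝ) : lap (c • p) = c • lap p := by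
  simp [lap, Finset.smul_sum]

lemma lap_X_mul (i : Fin d) (q : MvPolynomial (Fin d) ℝ) :
    lap (X i * q) = X i * lap q + 2 * pderiv i q := by
  classical
  unfold lap
  have key : ∀ j : Fin d, pderiv j (pderiv j (X i * q)) =
      (if j = i then 2 * pderiv i q else 0) + X i * pderiv j (pderiv j q) := by
    intro j
    rw [pderiv_mul, map_add, pderiv_mul, pderiv_mul]
    rcases eq_or_ne j i with rfl | hj
    · rw [pderiv_X_self]
      simp only [if_pos rfl]
      ring_nf
      simp [pderiv_one]
      ring
    · rw [pderiv_X_of_ne (Ne.symm hj)]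
      simp [hj]
  rw [Finset.sum_congr rfl (fun j _ => key j), Finset.sum_add_distrib,
    Finset.sum_ite_eq' Finset.univ i (fun _ => 2 * pderiv i q), ← Finset.mul_sum]
  simp [add_comm]

lemma lap_pdiv (v : Fin d → MvPolynomial (Fin d) ℝ) :
    lap (pdiv v) = ∑ i, pderiv i (lap (v i)) := by
  unfold lap pdiv
  simp only [map_sum]
  rw [Finset.sum_comm]
  refine Finset.sum_congr rfl fun i _ => ?_
  refine Finset.sum_congr rfl fun j _ => ?_
  rw [pderiv_comm' j i, pderiv_comm' j i]

lemma coeff_L (t : Fin d →₀ ℕ) (q : MvPolynomial (Fin d) ℝ) :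
    coeff t (pdiv fun i => X i * q) = ((d : ℝ) + (t.sum fun _ e => e)) * coeff t q := by
  unfold pdiv
  rw [coeff_sum]
  have key : ∀ i : Fin d, coeff t (pderiv i (X i * q)) = ((t i : ℝ) + 1) * coeff t q := by
    intro i
    rw [coeff_pderiv']
    congr 1
    rw [add_comm t, coeff_X_mul]
  rw [Finset.sum_congr rfl fun i _ => key i, ← Finset.sum_mul]
  congr 1
  rw [tdeg_eq]
  push_cast
  rw [Finset.sum_add_distrib]
  simp [add_comm]

lemma totalDegree_le_of_coeff {n : ℕ} {q : MvPolynomial (Fin d) ℝ}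
    (h : ∀ t, coeff t q ≠ 0 → (t.sum fun _ e => e) ≤ n) : q.totalDegree ≤ n :=
  Finset.sup_le fun t ht => h t (mem_support_iff.mp ht)

lemma totalDegree_pderiv_le' {k : ℕ} (j : Fin d) {f : MvPolynomial (Fin d) ℝ}
    (hf : f.totalDegree ≤ k) : (pderiv j f).totalDegree ≤ k - 1 := by
  refine totalDegree_le_of_coeff fun t ht => ?_
  rw [coeff_pderiv'] at ht
  have h2 : coeff (t + Finsupp.single j 1) f ≠ 0 := by
    intro h; rw [h, mul_zero] at ht; exact ht rfl
  have h3 := le_totalDegree (mem_support_iff.mpr h2)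
  rw [tdeg_add_single] at h3
  omega

noncomputable def invE {d : ℕ} (p : MvPolynomial (Fin d) ℝ) : MvPolynomial (Fin d) ℝ :=
  ∑ s ∈ p.support, monomial s (coeff s p / ((d : ℝ) + (s.sum fun _ e => e)))

lemma coeff_invE (t : Fin d →₀ ℕ) (p : MvPolynomial (Fin d) ℝ) :
    coeff t (invE p) = coeff t p / ((d : ℝ) + (t.sum fun _ e => e)) := by
  unfold invE
  rw [coeff_sum]
  simp only [coeff_monomial]
  rw [Finset.sum_ite_eq' p.support t]
  split_ifs with h
  · rfl
  · rw [notMem_support_iff.mp h, zero_div]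

lemma totalDegree_invE_le (p : MvPolynomial (Fin d) ℝ) :
    (invE p).totalDegree ≤ p.totalDegree := by
  refine totalDegree_le_of_coeff fun t ht => ?_
  rw [coeff_invE] at ht
  have h1 : coeff t p ≠ 0 := fun h => ht (by rw [h, zero_div])
  exact le_totalDegree (mem_support_iff.mpr h1)

lemma dpos_ne {d : ℕ} (hd : 0 < d) (x : ℕ) : ((d : ℝ) + x) ≠ 0 := by
  have : (0:ℝ) < d := by exact_mod_cast hd
  positivity

lemma L_invE (hd : 0 < d) (p : MvPolynomial (Fin d) ℝ) :
    pdiv (fun i => X i * invE p) = p := by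
  apply MvPolynomial.ext; intro t
  rw [coeff_L, coeff_invE, mul_div_cancel₀]
  exact dpos_ne hd _

lemma lap_invE (_hd : 0 < d) {p : MvPolynomial (Fin d) ℝ} (hp : lap p = 0) :
    lap (invE p) = 0 := by
  apply MvPolynomial.ext; intro t
  rw [coeff_lap, coeff_zero]
  calc ∑ j, ((t j + 1) * (t j + 2) : ℝ) * coeff (t + Finsupp.single j 2) (invE p)
      = (∑ j, ((t j + 1) * (t j + 2) : ℝ) * coeff (t + Finsupp.single j 2) p) /
          ((d : ℝ) + ((t.sum fun _ e => e) + 2)) := by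
        rw [Finset.sum_div]
        refine Finset.sum_congr rfl fun j _ => ?_
        rw [coeff_invE, tdeg_add_single, mul_div_assoc]
        push_cast
        ring_nf
    _ = coeff t (lap p) / ((d : ℝ) + ((t.sum fun _ e => e) + 2)) := by rw [coeff_lap]
    _ = 0 := by rw [hp, coeff_zero, zero_div]

end Aux


section Main
open MvPolynomial

variable {d k : ℕ}

lemma half_smul_two (f : MvPolynomial (Fin d) ℝ) : (1/2 : ℝ) • (2 * f) = f := by
  have h : (2 : MvPolynomial (Fin d) ℝ) * f = (2:ℝ) • f := by
    rw [smul_eq_C_mul, map_ofNat]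
  rw [h, smul_smul]
  norm_num

lemma lap_q_eq_zero {v : Fin d → MvPolynomial (Fin d) ℝ} {q : MvPolynomial (Fin d) ℝ}
    (hvq : ∀ i, lap (v i) = pderiv i q) (hdv : pdiv v = 0) : lap q = 0 := by
  have h1 : lap (pdiv v) = 0 := by rw [hdv]; simp [lap]
  rw [lap_pdiv] at h1
  calc lap q = ∑ i, pderiv i (lap (v i)) := by
        simp only [hvq]; rfl
    _ = 0 := h1

lemma phi_mem (hk : 1 ≤ k) {v : Fin d → MvPolynomial (Fin d) ℝ} {q : MvPolynomial (Fin d) ℝ}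
    (h : (v, q) ∈ trefftzSpace d k) :
    (fun i => v i - (1/2 : ℝ) • (X i * q)) ∈ harmonicSpace d k := by
  obtain ⟨hv, hq, hvq, hdv⟩ := h
  have hq' : q.totalDegree ≤ k - 1 := hq
  have hlq : lap q = 0 := lap_q_eq_zero hvq hdv
  constructor
  · intro i
    show (v i - (1/2 : ℝ) • (X i * q)).totalDegree ≤ k
    rw [sub_eq_add_neg, ← neg_smul]
    refine le_trans (totalDegree_add _ _) (max_le (hv i) ?_)
    refine le_trans (totalDegree_smul_le _ _) ?_
    refine le_trans (totalDegree_mul _ _) ?_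
    rw [totalDegree_X]
    omega
  · intro i
    show lap (v i - (1/2 : ℝ) • (X i * q)) = 0
    rw [lap_sub, lap_smul, lap_X_mul, hvq i, hlq, mul_zero, zero_add, half_smul_two, sub_self]

noncomputable def Phi (d k : ℕ) (hk : 1 ≤ k) :
    trefftzSpace d k →ₗ[ℝ] harmonicSpace d k where
  toFun x := ⟨fun i => x.1.1 i - (1/2 : ℝ) • (X i * x.1.2), phi_mem hk x.2⟩
  map_add' x y := by
    apply Subtype.ext
    funext i
    show (x + y).1.1 i - (1/2 : ℝ) • (X i * (x + y).1.2) = _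
    have h1 : (x + y).1.1 i = x.1.1 i + y.1.1 i := rfl
    have h2 : (x + y).1.2 = x.1.2 + y.1.2 := rfl
    rw [h1, h2]
    show _ = (x.1.1 i - (1/2 : ℝ) • (X i * x.1.2)) + (y.1.1 i - (1/2 : ℝ) • (X i * y.1.2))
    rw [mul_add, smul_add]
    ring
  map_smul' c x := by
    apply Subtype.ext
    funext i
    show (c • x).1.1 i - (1/2 : ℝ) • (X i * (c • x).1.2) = _
    have h1 : (c • x).1.1 i = c • x.1.1 i := rfl
    have h2 : (c • x).1.2 = c • x.1.2 := rfl
    rw [h1, h2]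
    show _ = c • (x.1.1 i - (1/2 : ℝ) • (X i * x.1.2))
    rw [smul_sub]
    congr 1
    rw [smul_comm]
    congr 1
    rw [mul_smul_comm]

theorem finrank_trefftzSpace_eq_finrank_harmonic' (d k : ℕ) (hd : 0 < d) (hk : 2 ≤ k) :
    Module.finrank ℝ (trefftzSpace d k) = Module.finrank ℝ (harmonicSpace d k) := by
  have hk1 : 1 ≤ k := by omega
  have hbij : Function.Bijective (Phi d k hk1) := by
    constructor
    · rw [← LinearMap.ker_eq_bot, LinearMap.ker_eq_bot']
      rintro ⟨⟨v, q⟩, hv, hq, hvq, hdv⟩ hm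
      have hm' : ∀ i, v i - (1/2 : ℝ) • (X i * q) = 0 :=
        fun i => congrFun (congrArg Subtype.val hm) i
      have hv' : ∀ i, v i = (1/2 : ℝ) • (X i * q) := fun i => by
        have := hm' i; rwa [sub_eq_zero] at this
      have hq0 : q = 0 := by
        have h2 : pdiv v = (1/2 : ℝ) • pdiv (fun i => X i * q) := by
          unfold pdiv
          rw [Finset.smul_sum]
          refine Finset.sum_congr rfl fun i _ => ?_
          rw [hv' i, Derivation.map_smul]
        have h1 : pdiv (fun i => X i * q) = 0 := by
          calc pdiv (fun i => X i * q)
              = (2 : ℝ) • ((1/2 : ℝ) • pdiv (fun i => X i * q)) := by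
                rw [smul_smul]; norm_num
            _ = (2 : ℝ) • pdiv v := by rw [← h2]
            _ = 0 := by rw [show pdiv v = 0 from hdv, smul_zero]
        apply MvPolynomial.ext; intro t
        have h3 := congrArg (MvPolynomial.coeff t) h1
        rw [coeff_L, coeff_zero] at h3
        rcases mul_eq_zero.mp h3 with h | h
        · exact absurd h (dpos_ne hd _)
        · rw [h, coeff_zero]
      have hv0 : v = 0 := funext fun i => by rw [hv' i, hq0, mul_zero, smul_zero]; rfl
      apply Subtype.ext
      show (v, q) = 0
      rw [hv0, hq0]
      rfl
    · rintro ⟨w, hw, hlw⟩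
      set p : MvPolynomial (Fin d) ℝ := (-2 : ℝ) • pdiv w with hp
      set q : MvPolynomial (Fin d) ℝ := invE p with hqdef
      have hlapp : lap p = 0 := by
        rw [hp, lap_smul, lap_pdiv]
        simp only [hlw]
        simp
      have hlq : lap q = 0 := lap_invE hd hlapp
      have hLq : pdiv (fun i => X i * q) = p := L_invE hd p
      have hdegq : q.totalDegree ≤ k - 1 := by
        refine le_trans (totalDegree_invE_le p) ?_
        rw [hp]
        refine le_trans (totalDegree_smul_le _ _) ?_
        unfold pdiv
        refine le_trans (totalDegree_finset_sum _ _) (Finset.sup_le fun i _ => ?_)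
        exact totalDegree_pderiv_le' i (hw i)
      set v : Fin d → MvPolynomial (Fin d) ℝ := fun i => w i + (1/2 : ℝ) • (X i * q) with hvdef
      have hmem : (v, q) ∈ trefftzSpace d k := by
        refine ⟨fun i => ?_, hdegq, fun i => ?_, ?_⟩
        · show (w i + (1/2 : ℝ) • (X i * q)).totalDegree ≤ k
          refine le_trans (totalDegree_add _ _) (max_le (hw i) ?_)
          refine le_trans (totalDegree_smul_le _ _) ?_
          refine le_trans (totalDegree_mul _ _) ?_
          rw [totalDegree_X]
          omega
        · show lap (w i + (1/2 : ℝ) • (X i * q)) = pderiv i q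
          rw [show lap (w i + (1/2 : ℝ) • (X i * q)) = lap (w i) + lap ((1/2:ℝ) • (X i * q)) by
              simp [lap, Finset.sum_add_distrib],
            hlw i, zero_add, lap_smul, lap_X_mul, hlq, mul_zero, zero_add, half_smul_two]
        · show pdiv v = 0
          have h2 : pdiv v = pdiv w + (1/2 : ℝ) • pdiv (fun i => X i * q) := by
            unfold pdiv
            rw [Finset.smul_sum, ← Finset.sum_add_distrib]
            refine Finset.sum_congr rfl fun i _ => ?_
            show pderiv i (w i + (1/2 : ℝ) • (X i * q)) = _
            rw [map_add, Derivation.map_smul]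
          rw [h2, hLq, hp, smul_smul]
          norm_num
      refine ⟨⟨(v, q), hmem⟩, ?_⟩
      apply Subtype.ext
      funext i
      show v i - (1/2 : ℝ) • (X i * q) = w i
      show (w i + (1/2 : ℝ) • (X i * q)) - (1/2 : ℝ) • (X i * q) = w i
      rw [add_sub_cancel_right]
  exact LinearEquiv.finrank_eq (LinearEquiv.ofBijective _ hbij)

end Main

/-- For `d ∈ {2, 3}` and `k ≥ 2`, the dimension of the local Trefftz space equals the dimension
of the space of vector-valued harmonic polynomials of degree at most `k`. -/
theorem finrank_trefftzSpace_eq_finrank_harmonic (d k : ℕ) (hd : d = 2 ∨ d = 3) (hk : 2 ≤ k) :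
    Module.finrank ℝ (trefftzSpace d k) = Module.finrank ℝ (harmonicSpace d k) := by
  have hd' : 0 < d := by rcases hd with h | h <;> omega
  exact finrank_trefftzSpace_eq_finrank_harmonic' d k hd' hk
end
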